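/- Let X ⊆ ℝ^n and Y ⊆ ℝ^m be nonempty compact convex sets with Y of diameter at most D_y, let p, q be proper closed convex functions with dom p = X, dom q = Y, and let h : ℝ^n×ℝ^m → ℝ be differentiable with L-Lipschitz gradient on X×Y and with h(x,·) concave for each x ∈ X. Fix ε > 0, ε̂ > 0, ŷ⁰ ∈ Y, x^k ∈ X, and define H*_ε(x) = max_{y∈Y}{h(x,y)+p(x)−q(y) − ε‖y−ŷ⁰‖²/(4D_y)} for x ∈ X and h_k(x,y) = h(x,y) − ε‖y−ŷ⁰‖²/(4D_y) + L‖x−x^k‖². Suppose (x^{k+1}, y^{k+1}) ∈ X×Y is an ε̂-primal-dual stationary point of min_x max_y {h_k(x,y)+p(x)−q(y)}, i.e. there exist s ∈ ∂p(x^{k+1}), t ∈ ∂q(y^{k+1}) with ‖∇_x h_k(x^{k+1},y^{k+1}) + s‖ ≤ ε̂ and ‖∇_y h_k(x^{k+1},y^{k+1}) − t‖ ≤ ε̂. Then H*_ε(x^k) − H*_ε(x^{k+1}) ≥ L‖x^k − x^{k+1}‖² − (L^{-1} + 4D_y²L·ε^{-2})·ε̂². -/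

import Mathlib

open Set Filter Topology

section helpers
variable {E : Type*} [NormedAddCommGroup E] [InnerProductSpace ℝ E] [CompleteSpace E]

lemma line_hasDerivAt {f : E → ℝ} {g x : E} (hf : HasGradientAt f g x) (z d : E) (t : ℝ)
    (hz : z + t • d = x) :
    HasDerivAt (fun τ : ℝ => f (z + τ • d)) (@inner ℝ _ _ g d) t := by
  have hc : HasDerivAt (fun τ : ℝ => z + τ • d) d t := by
    simpa using ((hasDerivAt_id t).smul_const d).const_add z
  have hf' : HasFDerivAt f (InnerProductSpace.toDual ℝ E g) (z + t • d) := by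
    rw [hz]; exact hasGradientAt_iff_hasFDerivAt.1 hf
  have := hf'.comp_hasDerivAt t hc
  simpa [Function.comp_def, InnerProductSpace.toDual_apply_apply] using this

lemma concave_grad_bound {s : Set E} {f : E → ℝ} (hf : ConcaveOn ℝ s f) {x y : E}
    (hx : x ∈ s) (hy : y ∈ s) {g : E} (hg : HasGradientAt f g x) :
    f y ≤ f x + @inner ℝ _ _ g (y - x) := by
  set φ : ℝ → ℝ := fun τ => f (x + τ • (y - x)) with hφ
  have hder : HasDerivAt φ (@inner ℝ _ _ g (y - x)) 0 :=
    line_hasDerivAt hg x (y - x) 0 (by simp)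
  have hslope : Tendsto (slope φ 0) (𝓝[>] 0) (𝓝 (@inner ℝ _ _ g (y - x))) :=
    (hasDerivAt_iff_tendsto_slope.1 hder).mono_left
      (nhdsWithin_mono _ (fun z hz => ne_of_gt hz))
  have hev : ∀ᶠ τ in 𝓝[>] (0:ℝ), f y - f x ≤ slope φ 0 τ := by
    filter_upwards [Ioc_mem_nhdsGT_of_mem (left_mem_Ico.2 zero_lt_one)] with τ hτ
    have h1 : x + τ • (y - x) = (1 - τ) • x + τ • y := by
      rw [smul_sub, sub_smul, one_smul]; abel
    have hmem := hf.2 hx hy (by linarith [hτ.2] : (0:ℝ) ≤ 1 - τ) hτ.1.le (by ring)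
    have hφτ : f x + τ * (f y - f x) ≤ φ τ := by
      rw [hφ]; simp only []
      rw [h1]
      calc f x + τ * (f y - f x) = (1 - τ) * f x + τ * f y := by ring
        _ = (1 - τ) • f x + τ • f y := by simp [smul_eq_mul]
        _ ≤ _ := hmem
    have hφ0 : φ 0 = f x := by simp [hφ]
    rw [slope_def_field, hφ0, sub_zero, le_div_iff₀ hτ.1]
    linarith
  have := ge_of_tendsto hslope hev
  linarith

end helpers

section descent
variable {E : Type*} [NormedAddCommGroup E] [InnerProductSpace ℝ E] [CompleteSpace E]

lemma descent_bound {s : Set E} (hs : Convex ℝ s) {f : E → ℝ} {g : E → E} {x y : E}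
    (hx : x ∈ s) (hy : y ∈ s)
    (hf : ∀ z ∈ s, HasGradientAt f (g z) z) {L : ℝ}
    (hlip : ∀ z ∈ s, ‖g z - g x‖ ≤ L * ‖z - x‖) :
    f x + @inner ℝ _ _ (g x) (y - x) - L / 2 * ‖y - x‖ ^ 2 ≤ f y := by
  set d := y - x with hd
  have hcmem : ∀ τ ∈ Icc (0:ℝ) 1, x + τ • d ∈ s := by
    intro τ hτ
    have h1 : x + τ • d = (1 - τ) • x + τ • y := by
      rw [hd, smul_sub, sub_smul, one_smul]; abel
    rw [h1]
    exact hs hx hy (by linarith [hτ.2]) hτ.1 (by ring)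
  set F : ℝ → ℝ := fun τ => f (x + τ • d) - τ * @inner ℝ _ _ (g x) d + L / 2 * ‖d‖ ^ 2 * τ ^ 2
    with hF
  have hFder : ∀ τ ∈ Icc (0:ℝ) 1, HasDerivAt F
      (@inner ℝ _ _ (g (x + τ • d)) d - @inner ℝ _ _ (g x) d + L * ‖d‖ ^ 2 * τ) τ := by
    intro τ hτ
    have h1 := line_hasDerivAt (hf _ (hcmem τ hτ)) x d τ rfl
    have h2 : HasDerivAt (fun τ : ℝ => τ * @inner ℝ _ _ (g x) d) (@inner ℝ _ _ (g x) d) τ := by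
      simpa using (hasDerivAt_id τ).mul_const (@inner ℝ _ _ (g x) d)
    have h3 : HasDerivAt (fun τ : ℝ => L / 2 * ‖d‖ ^ 2 * τ ^ 2) (L * ‖d‖ ^ 2 * τ) τ := by
      have := (hasDerivAt_pow 2 τ).const_mul (L / 2 * ‖d‖ ^ 2)
      exact this.congr_deriv (by ring)
    exact (h1.sub h2).add h3
  have hmono : MonotoneOn F (Icc (0:ℝ) 1) := by
    apply monotoneOn_of_deriv_nonneg (convex_Icc 0 1)
    · exact fun τ hτ => ((hFder τ hτ).continuousAt).continuousWithinAt
    · intro τ hτ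
      rw [interior_Icc] at hτ
      exact ((hFder τ (Ioo_subset_Icc_self hτ)).differentiableAt).differentiableWithinAt
    · intro τ hτ
      rw [interior_Icc] at hτ
      rw [(hFder τ (Ioo_subset_Icc_self hτ)).deriv]
      have hl := hlip _ (hcmem τ (Ioo_subset_Icc_self hτ))
      rw [add_sub_cancel_left, norm_smul, Real.norm_eq_abs, abs_of_pos hτ.1] at hl
      have hcs : |@inner ℝ _ _ (g (x + τ • d)) d - @inner ℝ _ _ (g x) d|
          ≤ ‖g (x + τ • d) - g x‖ * ‖d‖ := by
        rw [← inner_sub_left]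
        exact abs_real_inner_le_norm _ _
      have habs := abs_le.1 hcs
      nlinarith [norm_nonneg d, hτ.1.le, norm_nonneg (g (x + τ • d) - g x)]
  have hF10 := hmono (left_mem_Icc.2 zero_le_one) (right_mem_Icc.2 zero_le_one) zero_le_one
  have hF0 : F 0 = f x := by simp [hF]
  have hxy : x + d = y := by rw [hd]; abel
  have hF1 : F 1 = f y - @inner ℝ _ _ (g x) d + L / 2 * ‖d‖ ^ 2 := by
    simp [hF, hxy]
  rw [hF0, hF1] at hF10
  linarith

end descent

lemma quad_max {μ A ρ : ℝ} (hμ : 0 < μ) : A * ρ - μ * ρ ^ 2 ≤ A ^ 2 / (4 * μ) := by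
  rw [le_div_iff₀ (by positivity)]
  nlinarith [sq_nonneg (2 * μ * ρ - A)]



/-- Per-iteration descent inequality for the potential
`H*_ε(x) = max_{y∈Y} {h(x,y)+p(x)−q(y) − ε‖y−ŷ⁰‖²/(4D_y)}` at an `ε̂`-primal-dual stationary
point of the proximal subproblem `min_x max_y {h_k(x,y)+p(x)−q(y)}`. -/
theorem potential_descent {n m : ℕ}
    (X : Set (EuclideanSpace ℝ (Fin n))) (Y : Set (EuclideanSpace ℝ (Fin m)))
    (Dy : ℝ) (hDy : 0 < Dy)
    (hXne : X.Nonempty) (hXcp : IsCompact X) (hXcv : Convex ℝ X)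
    (hYne : Y.Nonempty) (hYcp : IsCompact Y) (hYcv : Convex ℝ Y)
    (hdY : ∀ u ∈ Y, ∀ v ∈ Y, ‖u - v‖ ≤ Dy)
    (p : EuclideanSpace ℝ (Fin n) → ℝ) (q : EuclideanSpace ℝ (Fin m) → ℝ)
    (hpcvx : ConvexOn ℝ X p) (hplsc : LowerSemicontinuousOn p X)
    (hqcvx : ConvexOn ℝ Y q) (hqlsc : LowerSemicontinuousOn q Y)
    (h : EuclideanSpace ℝ (Fin n) → EuclideanSpace ℝ (Fin m) → ℝ)
    (gx : EuclideanSpace ℝ (Fin n) → EuclideanSpace ℝ (Fin m) → EuclideanSpace ℝ (Fin n))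
    (gy : EuclideanSpace ℝ (Fin n) → EuclideanSpace ℝ (Fin m) → EuclideanSpace ℝ (Fin m))
    (L : ℝ) (hL : 0 < L)
    (hgx : ∀ x ∈ X, ∀ y ∈ Y, HasGradientAt (fun x' => h x' y) (gx x y) x)
    (hgy : ∀ x ∈ X, ∀ y ∈ Y, HasGradientAt (fun y' => h x y') (gy x y) y)
    -- L-Lipschitz continuity of ∇h on X×Y (in the Euclidean product norm)
    (hLip : ∀ x ∈ X, ∀ y ∈ Y, ∀ x' ∈ X, ∀ y' ∈ Y,
      ‖gx x y - gx x' y'‖ ^ 2 + ‖gy x y - gy x' y'‖ ^ 2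
        ≤ L ^ 2 * (‖x - x'‖ ^ 2 + ‖y - y'‖ ^ 2))
    (hconc : ∀ x ∈ X, ConcaveOn ℝ Y (fun y => h x y))
    (ε εh : ℝ) (hε : 0 < ε) (hεh : 0 < εh)
    (y0 : EuclideanSpace ℝ (Fin m)) (hy0 : y0 ∈ Y)
    (xk : EuclideanSpace ℝ (Fin n)) (hxk : xk ∈ X)
    (x1 : EuclideanSpace ℝ (Fin n)) (y1 : EuclideanSpace ℝ (Fin m))
    (hx1 : x1 ∈ X) (hy1 : y1 ∈ Y)
    -- ε̂-primal-dual stationarity of (x^{k+1}, y^{k+1}) for the subproblem: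
    -- ∇_x h_k(x,y) = ∇_x h(x,y) + 2L(x − x^k), ∇_y h_k(x,y) = ∇_y h(x,y) − ε/(2D_y)(y − ŷ⁰)
    (s : EuclideanSpace ℝ (Fin n)) (t : EuclideanSpace ℝ (Fin m))
    (hs : ∀ u ∈ X, p x1 + @inner ℝ _ _ s (u - x1) ≤ p u)
    (ht : ∀ v ∈ Y, q y1 + @inner ℝ _ _ t (v - y1) ≤ q v)
    (hsx : ‖gx x1 y1 + (2 * L) • (x1 - xk) + s‖ ≤ εh)
    (hsy : ‖gy x1 y1 - (ε / (2 * Dy)) • (y1 - y0) - t‖ ≤ εh) :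
    sSup ((fun y => h xk y + p xk - q y - ε / (4 * Dy) * ‖y - y0‖ ^ 2) '' Y)
        - sSup ((fun y => h x1 y + p x1 - q y - ε / (4 * Dy) * ‖y - y0‖ ^ 2) '' Y)
      ≥ L * ‖xk - x1‖ ^ 2 - (L⁻¹ + 4 * Dy ^ 2 * L / ε ^ 2) * εh ^ 2 := by
  have hL0 : L ≠ 0 := ne_of_gt hL
  have hε0 : ε ≠ 0 := ne_of_gt hε
  have hDy0 : Dy ≠ 0 := ne_of_gt hDy
  -- ===== dual side: pointwise bound on φ1 over Y =====
  have hdual : ∀ y ∈ Y, h x1 y + p x1 - q y - ε / (4 * Dy) * ‖y - y0‖ ^ 2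
      ≤ (h x1 y1 + p x1 - q y1 - ε / (4 * Dy) * ‖y1 - y0‖ ^ 2) + Dy / ε * εh ^ 2 := by
    intro y hy
    have A1 := concave_grad_bound (hconc x1 hx1) hy1 hy (hgy x1 hx1 y1 hy1)
    have A2 := ht y hy
    have A3 : ‖y - y0‖ ^ 2
        = ‖y1 - y0‖ ^ 2 + 2 * @inner ℝ _ _ (y1 - y0) (y - y1) + ‖y - y1‖ ^ 2 := by
      have hyd : y - y0 = (y1 - y0) + (y - y1) := by abel
      rw [hyd, norm_add_sq_real]
    have A3' : ε / (4 * Dy) * ‖y - y0‖ ^ 2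
        = ε / (4 * Dy) * ‖y1 - y0‖ ^ 2 + ε / (2 * Dy) * @inner ℝ _ _ (y1 - y0) (y - y1)
          + ε / (4 * Dy) * ‖y - y1‖ ^ 2 := by
      rw [A3]; field_simp; ring
    have A4 : @inner ℝ _ _ (gy x1 y1 - (ε / (2 * Dy)) • (y1 - y0) - t) (y - y1)
        = @inner ℝ _ _ (gy x1 y1) (y - y1)
          - ε / (2 * Dy) * @inner ℝ _ _ (y1 - y0) (y - y1) - @inner ℝ _ _ t (y - y1) := by
      rw [inner_sub_left, inner_sub_left, real_inner_smul_left]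
    have A5 : @inner ℝ _ _ (gy x1 y1 - (ε / (2 * Dy)) • (y1 - y0) - t) (y - y1)
        ≤ εh * ‖y - y1‖ :=
      le_trans (real_inner_le_norm _ _) (mul_le_mul_of_nonneg_right hsy (norm_nonneg _))
    have A6 : εh * ‖y - y1‖ - ε / (4 * Dy) * ‖y - y1‖ ^ 2 ≤ Dy / ε * εh ^ 2 := by
      have hq := quad_max (μ := ε / (4 * Dy)) (A := εh) (ρ := ‖y - y1‖) (by positivity)
      have he : εh ^ 2 / (4 * (ε / (4 * Dy))) = Dy / ε * εh ^ 2 := by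
        field_simp
      linarith [he ▸ hq]
    linarith
  -- ===== sSup bounds =====
  have hS2 : sSup ((fun y => h x1 y + p x1 - q y - ε / (4 * Dy) * ‖y - y0‖ ^ 2) '' Y)
      ≤ (h x1 y1 + p x1 - q y1 - ε / (4 * Dy) * ‖y1 - y0‖ ^ 2) + Dy / ε * εh ^ 2 := by
    apply csSup_le (hYne.image _)
    rintro _ ⟨y, hy, rfl⟩
    exact hdual y hy
  have hbddS1 : BddAbove ((fun y => h xk y + p xk - q y - ε / (4 * Dy) * ‖y - y0‖ ^ 2) '' Y) := by
    refine ⟨h xk y1 + ‖gy xk y1‖ * Dy + p xk + (- q y1 + ‖t‖ * Dy), ?_⟩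
    rintro _ ⟨y, hy, rfl⟩
    have hc := concave_grad_bound (hconc xk hxk) hy1 hy (hgy xk hxk y1 hy1)
    have h1 : @inner ℝ _ _ (gy xk y1) (y - y1) ≤ ‖gy xk y1‖ * Dy :=
      le_trans (real_inner_le_norm _ _)
        (mul_le_mul_of_nonneg_left (hdY y hy y1 hy1) (norm_nonneg _))
    have h2 : -(q y) ≤ -(q y1) + ‖t‖ * Dy := by
      have hq := ht y hy
      have h4 := abs_le.1 (abs_real_inner_le_norm t (y - y1))
      have h5 := mul_le_mul_of_nonneg_left (hdY y hy y1 hy1) (norm_nonneg t)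
      linarith
    have h0 : 0 ≤ ε / (4 * Dy) * ‖y - y0‖ ^ 2 := by positivity
    simp only []
    linarith
  have hS1 : h xk y1 + p xk - q y1 - ε / (4 * Dy) * ‖y1 - y0‖ ^ 2
      ≤ sSup ((fun y => h xk y + p xk - q y - ε / (4 * Dy) * ‖y - y0‖ ^ 2) '' Y) :=
    le_csSup hbddS1 ⟨y1, hy1, rfl⟩
  -- ===== primal side =====
  have hlipx : ∀ z ∈ X, ‖gx z y1 - gx x1 y1‖ ≤ L * ‖z - x1‖ := by
    intro z hz
    have h1 := hLip z hz y1 hy1 x1 hx1 y1 hy1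
    have h2 : ‖gx z y1 - gx x1 y1‖ ^ 2 ≤ (L * ‖z - x1‖) ^ 2 := by
      have h3 : (0:ℝ) ≤ ‖gy z y1 - gy x1 y1‖ ^ 2 := sq_nonneg _
      simp only [sub_self, norm_zero] at h1
      nlinarith
    have h3 := Real.sqrt_le_sqrt h2
    rwa [Real.sqrt_sq (norm_nonneg _), Real.sqrt_sq (by positivity)] at h3
  have hdesc := descent_bound (f := fun x' => h x' y1) (g := fun z => gx z y1)
    hXcv hx1 hxk (fun z hz => hgx z hz y1 hy1) hlipx
  have hps := hs xk hxk
  have hsplit : @inner ℝ _ _ (gx x1 y1 + (2 * L) • (x1 - xk) + s) (xk - x1)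
      = @inner ℝ _ _ (gx x1 y1) (xk - x1) + @inner ℝ _ _ s (xk - x1)
        - 2 * L * ‖xk - x1‖ ^ 2 := by
    rw [inner_add_left, inner_add_left, real_inner_smul_left]
    have hni : @inner ℝ _ _ (x1 - xk) (xk - x1) = -‖xk - x1‖ ^ 2 := by
      rw [show x1 - xk = -(xk - x1) by abel, inner_neg_left, real_inner_self_eq_norm_sq]
    rw [hni]; ring
  have hw : -(εh * ‖xk - x1‖) ≤ @inner ℝ _ _ (gx x1 y1 + (2 * L) • (x1 - xk) + s) (xk - x1) := by
    have h4 := abs_le.1 (abs_real_inner_le_norm (gx x1 y1 + (2 * L) • (x1 - xk) + s) (xk - x1))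
    have h5 := mul_le_mul_of_nonneg_right hsx (norm_nonneg (xk - x1))
    linarith
  -- ===== final arithmetic =====
  have hpos : (0:ℝ) < 2 * L * ε ^ 2 := by positivity
  have hkey : 0 ≤ L / 2 * ‖xk - x1‖ ^ 2 - εh * ‖xk - x1‖
      + (L⁻¹ + 4 * Dy ^ 2 * L / ε ^ 2 - Dy / ε) * εh ^ 2 := by
    have e1 : (2 * L * ε ^ 2) * (L / 2 * ‖xk - x1‖ ^ 2 - εh * ‖xk - x1‖
        + (L⁻¹ + 4 * Dy ^ 2 * L / ε ^ 2 - Dy / ε) * εh ^ 2)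
        = (L * ε * ‖xk - x1‖ - ε * εh) ^ 2 + εh ^ 2 * ((ε - Dy * L) ^ 2 + 7 * Dy ^ 2 * L ^ 2) := by
      field_simp; ring
    have e2 : 0 ≤ (2 * L * ε ^ 2) * (L / 2 * ‖xk - x1‖ ^ 2 - εh * ‖xk - x1‖
        + (L⁻¹ + 4 * Dy ^ 2 * L / ε ^ 2 - Dy / ε) * εh ^ 2) := by
      rw [e1]; positivity
    exact (mul_le_mul_iff_right₀ hpos).1 (by simpa using e2)
  linarith
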